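/- For every integer n ≥ 2, the polynomial identity R_{2n-1}(x) = (1+x)^{n-2} · Σ_{j=1}^{n} 2^{2-j} (2j-1)! U(n,j) x^j (1-x)^{n-j} holds in ℚ[x]. -/
import Mathlib


open Polynomial Finset

/-- The value (in `{0,…,n-1}`) of the permutation `π` at the 0-indexed position `j`
(junk value `0` outside the range). -/
def permVal {n : ℕ} (π : Equiv.Perm (Fin n)) (j : ℕ) : ℕ :=
  if h : j < n then ((π ⟨j, h⟩ : Fin n) : ℕ) else 0

/-- `π` changes direction at the 0-indexed position `i`
(i.e. at the 1-indexed position `i+1`). -/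
def changesDir {n : ℕ} (π : Equiv.Perm (Fin n)) (i : ℕ) : Prop :=
  (permVal π (i - 1) < permVal π i ∧ permVal π (i + 1) < permVal π i) ∨
  (permVal π i < permVal π (i - 1) ∧ permVal π i < permVal π (i + 1))

instance {n : ℕ} (π : Equiv.Perm (Fin n)) (i : ℕ) : Decidable (changesDir π i) := by
  unfold changesDir; infer_instance

/-- The number of alternating runs of `π ∈ S_n`: one more than the number of
1-indexed positions `i ∈ {2,…,n-1}` (0-indexed `i ∈ {1,…,n-2}`) where `π` changes direction. -/
def altRuns (n : ℕ) (π : Equiv.Perm (Fin n)) : ℕ :=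
  1 + ((Finset.Ioo 0 (n - 1)).filter (fun i => changesDir π i)).card

/-- The central factorial numbers of even indices `U(n,k)`, defined by the recurrence
`U(n,k) = U(n-1,k-1) + k^2 * U(n-1,k)` with `U(1,1) = 1` and `U(1,k) = 0` for `k ≠ 1`. -/
def U : ℕ → ℕ → ℤ
  | 0, _ => 0
  | 1, k => if k = 1 then 1 else 0
  | _ + 2, 0 => 0
  | n + 2, k + 1 => U (n + 1) k + ((k : ℤ) + 1) ^ 2 * U (n + 1) (k + 1)

/-- The alternating run polynomial `R_n(x) = Σ_k R(n,k) x^k`. -/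
noncomputable def Rpoly (n : ℕ) : Polynomial ℚ :=
  ∑ π : Equiv.Perm (Fin n), Polynomial.X ^ altRuns n π


/-- Whether the inserted permutation changes direction at interior position `i`,
when the max is inserted at slot `p`, expressed via the ascent pattern `e`. -/
def slotC (e : ℕ → Bool) (p i : ℕ) : Bool :=
  if i + 1 < p then (e (i-1) != e i)
  else if i + 1 = p then !e (i-1)
  else if i = p then true
  else if i = p + 1 then e (i-1)
  else (e (i-2) != e (i-1))

def slotN (e : ℕ → Bool) (m p : ℕ) : ℕ :=
  ((Finset.Ioo 0 m).filter (fun i => slotC e p i = true)).card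

def runs (e : ℕ → Bool) (m : ℕ) : ℕ :=
  1 + ((Finset.Ioo 0 (m-1)).filter (fun i => (e (i-1) != e i) = true)).card

def inc (e : ℕ → Bool) (m p : ℕ) : ℕ :=
  if p = 0 then (if e 0 then 1 else 0)
  else if p = m then (if e (m-2) then 0 else 1)
  else if p = 1 then (if e 0 then (if e 1 then 2 else 0) else 1)
  else if p = m-1 then (if e (m-2) then 1 else if e (m-3) then 0 else 2)
  else if (e (p-2) && !e (p-1)) || (e (p-1) && !e p) then 0 else 2

lemma Ioo_zero (m : ℕ) : Finset.Ioo 0 m = Finset.Ico 1 m := by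
  ext x; simp only [Finset.mem_Ioo, Finset.mem_Ico]; omega

lemma card_split (Q : ℕ → Prop) [DecidablePred Q] {a c b : ℕ} (h1 : a ≤ c) (h2 : c ≤ b) :
    ((Finset.Ico a b).filter Q).card
      = ((Finset.Ico a c).filter Q).card + ((Finset.Ico c b).filter Q).card := by
  rw [← Finset.Ico_union_Ico_eq_Ico h1 h2, Finset.filter_union,
    Finset.card_union_of_disjoint]
  exact Finset.disjoint_filter_filter (Finset.Ico_disjoint_Ico_consecutive a c b)

lemma card_single (Q : ℕ → Prop) [DecidablePred Q] (c : ℕ) :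
    ((Finset.Ico c (c+1)).filter Q).card = if Q c then 1 else 0 := by
  rw [Nat.Ico_succ_singleton, Finset.filter_singleton]
  split <;> simp

lemma card_shift (P : ℕ → Bool) (a b : ℕ) (ha : 1 ≤ a) :
    ((Finset.Ico a b).filter (fun i => P (i-1) = true)).card
      = ((Finset.Ico (a-1) (b-1)).filter (fun i => P i = true)).card := by
  apply Finset.card_bij (fun i _ => i - 1)
  · intro i hi
    simp only [Finset.mem_filter, Finset.mem_Ico] at hi ⊢
    exact ⟨⟨by omega, by omega⟩, hi.2⟩
  · intro i hi j hj h
    simp only [Finset.mem_filter, Finset.mem_Ico] at hi hj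
    omega
  · intro j hj
    simp only [Finset.mem_filter, Finset.mem_Ico] at hj
    refine ⟨j + 1, ?_, by omega⟩
    simp only [Finset.mem_filter, Finset.mem_Ico, Nat.add_sub_cancel]
    refine ⟨⟨by omega, by omega⟩, hj.2⟩

section slotCvals
variable (e : ℕ → Bool) (p i : ℕ)

lemma slotC_lt (h : i + 1 < p) : slotC e p i = (e (i-1) != e i) := by
  unfold slotC; rw [if_pos h]

lemma slotC_eqm1 (h : i + 1 = p) : slotC e p i = !e (i-1) := by
  unfold slotC; rw [if_neg (by omega), if_pos h]

lemma slotC_eq (h : i = p) : slotC e p i = true := by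
  unfold slotC; rw [if_neg (by omega), if_neg (by omega), if_pos h]

lemma slotC_eqp1 (h : i = p + 1) : slotC e p i = e (i-1) := by
  unfold slotC; rw [if_neg (by omega), if_neg (by omega), if_neg (by omega), if_pos h]

lemma slotC_gt (h : p + 1 < i) : slotC e p i = (e (i-2) != e (i-1)) := by
  unfold slotC; rw [if_neg (by omega), if_neg (by omega), if_neg (by omega), if_neg (by omega)]

end slotCvals

lemma card_filter_congr {s : Finset ℕ} {P Q : ℕ → Prop} [DecidablePred P] [DecidablePred Q]
    (h : ∀ x ∈ s, P x ↔ Q x) : (s.filter P).card = (s.filter Q).card := by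
  rw [Finset.filter_congr h]

lemma slotN_eq (e : ℕ → Bool) (m p : ℕ) (hm : 3 ≤ m) (hp : p ≤ m) :
    slotN e m p + 1 = runs e m + inc e m p := by
  have hP : ∀ a b : ℕ, 1 ≤ a →
      ((Finset.Ico a b).filter (fun i => (e (i-2) != e (i-1)) = true)).card
        = ((Finset.Ico (a-1) (b-1)).filter (fun i => (e (i-1) != e i) = true)).card := by
    intro a b ha
    rw [← card_shift (fun j => e (j-1) != e j) a b ha]
    exact card_filter_congr (fun x _ => by rw [show x-1-1 = x-2 by omega])
  unfold slotN runs inc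
  rw [Ioo_zero, Ioo_zero]
  rcases eq_or_ne p 0 with rfl | hp0
  · rw [if_pos rfl]
    rw [card_split _ (by omega : (1:ℕ) ≤ 2) (by omega : 2 ≤ m), card_single,
      card_filter_congr (fun i hi => by
        rw [slotC_gt e 0 i (by simp only [Finset.mem_Ico] at hi; omega)]),
      hP 2 m (by omega), slotC_eqp1 e 0 1 rfl]
    norm_num
    cases e 0 <;> simp <;> omega
  rcases eq_or_ne p m with hpm | hpm
  · rw [if_neg hp0, if_pos hpm]
    rw [card_split _ (by omega : (1:ℕ) ≤ m-1) (by omega : m-1 ≤ m),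
      card_filter_congr (fun i hi => by
        rw [slotC_lt e p i (by simp only [Finset.mem_Ico] at hi; omega)]),
      show Finset.Ico (m-1) m = Finset.Ico (m-1) ((m-1)+1) by rw [show (m-1)+1 = m by omega],
      card_single, slotC_eqm1 e p (m-1) (by omega), show m-1-1 = m-2 by omega]
    cases e (m-2) <;> simp <;> omega
  rcases eq_or_ne p 1 with rfl | hp1
  · rw [if_neg hp0, if_neg hpm, if_pos rfl]
    rw [card_split _ (by omega : (1:ℕ) ≤ 2) (by omega : 2 ≤ m),
      card_split _ (by omega : (2:ℕ) ≤ 3) (by omega : 3 ≤ m),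
      card_single, card_single,
      card_filter_congr (fun i hi => by
        rw [slotC_gt e 1 i (by simp only [Finset.mem_Ico] at hi; omega)]),
      hP 3 m (by omega),
      slotC_eq e 1 1 rfl, slotC_eqp1 e 1 2 rfl,
      card_split (fun i => (e (i-1) != e i) = true) (by omega : (1:ℕ) ≤ 2) (by omega : 2 ≤ m-1),
      card_single]
    norm_num
    cases e 0 <;> cases e 1 <;> simp <;> omega
  rcases eq_or_ne p (m-1) with hpm1 | hpm1
  · rw [if_neg hp0, if_neg hpm, if_neg hp1, if_pos hpm1]
    rw [card_split _ (by omega : (1:ℕ) ≤ m-2) (by omega : m-2 ≤ m),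
      card_split _ (by omega : (m-2:ℕ) ≤ m-1) (by omega : m-1 ≤ m),
      show Finset.Ico (m-2) (m-1) = Finset.Ico (m-2) ((m-2)+1) by rw [show (m-2)+1 = m-1 by omega],
      show Finset.Ico (m-1) m = Finset.Ico (m-1) ((m-1)+1) by rw [show (m-1)+1 = m by omega],
      card_single, card_single,
      card_filter_congr (fun i hi => by
        rw [slotC_lt e p i (by simp only [Finset.mem_Ico] at hi; omega)]),
      slotC_eqm1 e p (m-2) (by omega), slotC_eq e p (m-1) (by omega),
      card_split (fun i => (e (i-1) != e i) = true) (by omega : (1:ℕ) ≤ m-2) (by omega : m-2 ≤ m-1),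
      show Finset.Ico (m-2) (m-1) = Finset.Ico (m-2) ((m-2)+1) by rw [show (m-2)+1 = m-1 by omega],
      card_single, show m-2-1 = m-3 by omega]
    cases e (m-3) <;> cases e (m-2) <;> simp <;> omega
  · -- general case 2 ≤ p ≤ m-2
    have h2p : 2 ≤ p := by omega
    have hpm2 : p ≤ m - 2 := by omega
    rw [if_neg hp0, if_neg hpm, if_neg hp1, if_neg hpm1]
    have hc1 : ((Finset.Ico 1 (p-1)).filter (fun i => slotC e p i = true)).card
        = ((Finset.Ico 1 (p-1)).filter (fun i => (e (i-1) != e i) = true)).card :=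
      card_filter_congr (fun i hi => by
        rw [slotC_lt e p i (by simp only [Finset.mem_Ico] at hi; omega)])
    have hc5 : ((Finset.Ico (p+2) m).filter (fun i => slotC e p i = true)).card
        = ((Finset.Ico (p+2) m).filter (fun i => (e (i-2) != e (i-1)) = true)).card :=
      card_filter_congr (fun i hi => by
        rw [slotC_gt e p i (by simp only [Finset.mem_Ico] at hi; omega)])
    rw [card_split _ (by omega : (1:ℕ) ≤ p-1) (by omega : p-1 ≤ m),
      card_split _ (by omega : (p-1:ℕ) ≤ p) (by omega : p ≤ m),
      card_split _ (by omega : (p:ℕ) ≤ p+1) (by omega : p+1 ≤ m),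
      card_split _ (by omega : (p+1:ℕ) ≤ p+2) (by omega : p+2 ≤ m),
      show Finset.Ico (p-1) p = Finset.Ico (p-1) ((p-1)+1) by rw [show (p-1)+1 = p by omega],
      card_single, card_single, card_single, hc1, hc5,
      hP (p+2) m (by omega),
      slotC_eqm1 e p (p-1) (by omega), slotC_eq e p p rfl, slotC_eqp1 e p (p+1) rfl,
      card_split (fun i => (e (i-1) != e i) = true) (by omega : (1:ℕ) ≤ p-1) (by omega : p-1 ≤ m-1),
      card_split (fun i => (e (i-1) != e i) = true) (by omega : (p-1:ℕ) ≤ p) (by omega : p ≤ m-1),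
      card_split (fun i => (e (i-1) != e i) = true) (by omega : (p:ℕ) ≤ p+1) (by omega : p+1 ≤ m-1),
      show Finset.Ico (p-1) p = Finset.Ico (p-1) ((p-1)+1) by rw [show (p-1)+1 = p by omega],
      card_single, card_single,
      show p-1-1 = p-2 by omega, show p+1-1 = p by omega, show p+2-1 = p+1 by omega]
    cases e (p-2) <;> cases e (p-1) <;> cases e p <;> simp <;> omega

section incvals
variable (e : ℕ → Bool) (m p : ℕ)

lemma inc_zero : inc e m 0 = if e 0 then 1 else 0 := by unfold inc; rw [if_pos rfl]

lemma inc_last (hm : 1 ≤ m) : inc e m m = if e (m-2) then 0 else 1 := by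
  unfold inc; rw [if_neg (by omega), if_pos rfl]

lemma inc_one (hm : 3 ≤ m) : inc e m 1 = if e 0 then (if e 1 then 2 else 0) else 1 := by
  unfold inc; rw [if_neg (by omega), if_neg (by omega), if_pos rfl]

lemma inc_pen (hm : 3 ≤ m) :
    inc e m (m-1) = if e (m-2) then 1 else if e (m-3) then 0 else 2 := by
  unfold inc; rw [if_neg (by omega), if_neg (by omega), if_neg (by omega), if_pos rfl]

lemma inc_mid (hm : 3 ≤ m) (h2 : 2 ≤ p) (h : p ≤ m-2) :
    inc e m p = if (e (p-2) && !e (p-1)) || (e (p-1) && !e p) then 0 else 2 := by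
  unfold inc
  rw [if_neg (by omega), if_neg (by omega), if_neg (by omega), if_neg (by omega)]

lemma inc_le_two : inc e m p ≤ 2 := by
  unfold inc; split_ifs <;> omega

end incvals

lemma card_classify (s : Finset ℕ) (f : ℕ → ℕ) (h : ∀ p ∈ s, f p ≤ 2) :
    s.card = (s.filter (fun p => f p = 0)).card + (s.filter (fun p => f p = 1)).card
      + (s.filter (fun p => f p = 2)).card := by
  induction s using Finset.induction_on with
  | empty => simp
  | @insert a s ha ih =>
    have hfa := h a (Finset.mem_insert_self a s)
    have ih' := ih (fun p hp => h p (Finset.mem_insert_of_mem hp))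
    have hnm : ∀ P : ℕ → Prop, ∀ inst : DecidablePred P, a ∉ s.filter P :=
      fun P inst hmem => ha (Finset.mem_of_mem_filter a hmem)
    have h3 : f a = 0 ∨ f a = 1 ∨ f a = 2 := by omega
    rcases h3 with h0 | h0 | h0 <;>
      [skip; skip; skip] <;>
      simp only [Finset.filter_insert, h0] <;> norm_num <;>
      rw [Finset.card_insert_of_notMem (hnm _ _), Finset.card_insert_of_notMem ha] <;>
      omega

lemma sum_pow_classify (s : Finset ℕ) (f : ℕ → ℕ) (h : ∀ p ∈ s, f p ≤ 2) :
    ∑ p ∈ s, (Polynomial.X : Polynomial ℚ)^(f p)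
      = Polynomial.C (((s.filter (fun p => f p = 0)).card : ℚ))
        + Polynomial.C (((s.filter (fun p => f p = 1)).card : ℚ)) * Polynomial.X
        + Polynomial.C (((s.filter (fun p => f p = 2)).card : ℚ)) * Polynomial.X^2 := by
  induction s using Finset.induction_on with
  | empty => simp
  | @insert a s ha ih =>
    have hfa := h a (Finset.mem_insert_self a s)
    have ih' := ih (fun p hp => h p (Finset.mem_insert_of_mem hp))
    have hnm : ∀ P : ℕ → Prop, ∀ inst : DecidablePred P, a ∉ s.filter P :=
      fun P inst hmem => ha (Finset.mem_of_mem_filter a hmem)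
    rw [Finset.sum_insert ha, ih']
    have h3 : f a = 0 ∨ f a = 1 ∨ f a = 2 := by omega
    rcases h3 with h0 | h0 | h0 <;>
      norm_num [Finset.filter_insert, h0] <;>
      rw [Finset.card_insert_of_notMem (hnm _ _)] <;>
      (try push_cast) <;>
      (try simp only [Polynomial.C_add, Polynomial.C_1, pow_zero, pow_one]) <;> ring

lemma count_one (e : ℕ → Bool) (m : ℕ) (hm : 3 ≤ m) :
    ((Finset.range (m+1)).filter (fun p => inc e m p = 1)).card = 2 := by
  rw [Finset.range_eq_Ico,
    card_split _ (by omega : (0:ℕ) ≤ 2) (by omega : 2 ≤ m+1),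
    card_split _ (by omega : (2:ℕ) ≤ m-1) (by omega : m-1 ≤ m+1),
    card_split (fun p => inc e m p = 1) (by omega : (0:ℕ) ≤ 1) (by omega : 1 ≤ 2),
    card_split (fun p => inc e m p = 1) (by omega : (m-1:ℕ) ≤ m) (by omega : m ≤ m+1),
    show Finset.Ico 0 1 = Finset.Ico 0 (0+1) from rfl, card_single,
    show Finset.Ico 1 2 = Finset.Ico 1 (1+1) from rfl, card_single,
    show Finset.Ico (m-1) m = Finset.Ico (m-1) ((m-1)+1) by rw [show (m-1)+1 = m by omega],
    card_single,
    show Finset.Ico m (m+1) = Finset.Ico m (m+1) from rfl, card_single]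
  have hmid : ((Finset.Ico 2 (m-1)).filter (fun p => inc e m p = 1)).card = 0 := by
    rw [Finset.card_eq_zero, Finset.filter_eq_empty_iff]
    intro p hp
    simp only [Finset.mem_Ico] at hp
    rw [inc_mid e m p hm (by omega) (by omega)]
    split_ifs <;> simp
  rw [hmid, inc_zero, inc_one e m hm, inc_pen e m hm, inc_last e m (by omega)]
  cases e 0 <;> cases e 1 <;> cases e (m-2) <;> cases e (m-3) <;> simp

lemma count_zero_aux (m : ℕ) (hm : 3 ≤ m) (e : ℕ → Bool) :
    (if e 0 then 0 else 1) + (if e 0 && !e 1 then 1 else 0)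
      + ((Finset.Ico 2 (m-1)).filter
          (fun p => ((e (p-2) && !e (p-1)) || (e (p-1) && !e p)) = true)).card
      + (if e (m-3) && !e (m-2) then 1 else 0) + (if e (m-2) then 1 else 0)
    = 1 + ((Finset.Ico 1 (m-1)).filter (fun i => (e (i-1) != e i) = true)).card := by
  induction m, hm using Nat.le_induction with
  | base =>
    rw [show (3:ℕ)-1 = 2 from rfl, show (3:ℕ)-2 = 1 from rfl, show (3:ℕ)-3 = 0 from rfl,
      Finset.Ico_self, Finset.filter_empty, Finset.card_empty,
      show Finset.Ico 1 2 = Finset.Ico 1 (1+1) from rfl, card_single]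
    cases e 0 <;> cases e 1 <;> simp
  | succ m hm ih =>
    have h1 : m + 1 - 1 = m := by omega
    have h2 : m + 1 - 2 = m - 1 := by omega
    have h3 : m + 1 - 3 = m - 2 := by omega
    rw [h1, h2, h3]
    rw [card_split _ (by omega : (2:ℕ) ≤ m-1) (by omega : m-1 ≤ m),
      show Finset.Ico (m-1) m = Finset.Ico (m-1) ((m-1)+1) by rw [show (m-1)+1 = m by omega],
      card_single,
      card_split (fun i => (e (i-1) != e i) = true) (by omega : (1:ℕ) ≤ m-1) (by omega : m-1 ≤ m),
      show Finset.Ico (m-1) m = Finset.Ico (m-1) ((m-1)+1) by rw [show (m-1)+1 = m by omega],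
      card_single,
      show m-1-1 = m-2 by omega, show m-1-2 = m-3 by omega]
    set A := ((Finset.Ico 2 (m-1)).filter
        (fun p => ((e (p-2) && !e (p-1)) || (e (p-1) && !e p)) = true)).card with hA
    set B := ((Finset.Ico 1 (m-1)).filter (fun i => (e (i-1) != e i) = true)).card with hB
    cases h4 : e (m-3) <;> cases h5 : e (m-2) <;> cases h6 : e (m-1) <;>
      simp only [h4, h5, h6] at ih ⊢ <;> simp at ih ⊢ <;> omega

lemma count_zero (e : ℕ → Bool) (m : ℕ) (hm : 3 ≤ m) :
    ((Finset.range (m+1)).filter (fun p => inc e m p = 0)).card = runs e m := by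
  rw [Finset.range_eq_Ico,
    card_split _ (by omega : (0:ℕ) ≤ 2) (by omega : 2 ≤ m+1),
    card_split _ (by omega : (2:ℕ) ≤ m-1) (by omega : m-1 ≤ m+1),
    card_split (fun p => inc e m p = 0) (by omega : (0:ℕ) ≤ 1) (by omega : 1 ≤ 2),
    card_split (fun p => inc e m p = 0) (by omega : (m-1:ℕ) ≤ m) (by omega : m ≤ m+1),
    show Finset.Ico 0 1 = Finset.Ico 0 (0+1) from rfl, card_single,
    show Finset.Ico 1 2 = Finset.Ico 1 (1+1) from rfl, card_single,
    show Finset.Ico (m-1) m = Finset.Ico (m-1) ((m-1)+1) by rw [show (m-1)+1 = m by omega],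
    card_single, card_single]
  have hmid : ((Finset.Ico 2 (m-1)).filter (fun p => inc e m p = 0)).card
      = ((Finset.Ico 2 (m-1)).filter
          (fun p => ((e (p-2) && !e (p-1)) || (e (p-1) && !e p)) = true)).card := by
    apply card_filter_congr
    intro p hp
    simp only [Finset.mem_Ico] at hp
    rw [inc_mid e m p hm (by omega) (by omega)]
    split_ifs with h <;> simp [h]
  rw [hmid, inc_zero, inc_one e m hm, inc_pen e m hm, inc_last e m (by omega)]
  have haux := count_zero_aux m hm e
  unfold runs
  rw [Ioo_zero]
  set A := ((Finset.Ico 2 (m-1)).filter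
      (fun p => ((e (p-2) && !e (p-1)) || (e (p-1) && !e p)) = true)).card with hA
  set B := ((Finset.Ico 1 (m-1)).filter (fun i => (e (i-1) != e i) = true)).card with hB
  cases h0 : e 0 <;> cases h1 : e 1 <;> cases h2 : e (m-2) <;> cases h3 : e (m-3) <;>
    simp only [h0, h1, h2, h3] at haux ⊢ <;> simp at haux ⊢ <;> omega

lemma runs_le (e : ℕ → Bool) (m : ℕ) (hm : 3 ≤ m) : runs e m ≤ m - 1 := by
  unfold runs
  have h := Finset.card_filter_le (Finset.Ioo 0 (m-1)) (fun i => (e (i-1) != e i) = true)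
  rw [Nat.card_Ioo] at h
  omega

lemma count_two (e : ℕ → Bool) (m : ℕ) (hm : 3 ≤ m) :
    ((Finset.range (m+1)).filter (fun p => inc e m p = 2)).card = m - 1 - runs e m := by
  have hc := card_classify (Finset.range (m+1)) (fun p => inc e m p)
    (fun p _ => inc_le_two e m p)
  beta_reduce at hc
  rw [Finset.card_range, count_zero e m hm, count_one e m hm] at hc
  have := runs_le e m hm
  omega

lemma slot_sum (e : ℕ → Bool) (m : ℕ) (hm : 3 ≤ m) :
    ∑ p ∈ Finset.range (m+1), (Polynomial.X : Polynomial ℚ)^(1 + slotN e m p)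
      = Polynomial.C ((runs e m : ℚ)) * Polynomial.X^(runs e m)
        + Polynomial.C 2 * Polynomial.X^(runs e m + 1)
        + Polynomial.C (((m-1) - runs e m : ℕ) : ℚ) * Polynomial.X^(runs e m + 2) := by
  rw [Finset.sum_congr rfl (fun p hp => by
    rw [show 1 + slotN e m p = runs e m + inc e m p from by
      have := slotN_eq e m p hm (by simp only [Finset.mem_range] at hp; omega)
      omega, pow_add])]
  rw [← Finset.mul_sum, sum_pow_classify _ _ (fun p _ => inc_le_two e m p),
    count_zero e m hm, count_one e m hm, count_two e m hm]
  have h2 : ((2:ℕ):ℚ) = (2:ℚ) := by norm_num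
  rw [h2]
  ring

/-! ### Permutation layer -/

def asc {n : ℕ} (σ : Equiv.Perm (Fin n)) (i : ℕ) : Bool :=
  decide (permVal σ i < permVal σ (i+1))

lemma permVal_lt {n : ℕ} (σ : Equiv.Perm (Fin n)) {j : ℕ} (h : j < n) :
    permVal σ j = ((σ ⟨j, h⟩ : Fin n) : ℕ) := dif_pos h

lemma permVal_lt_self {n : ℕ} (σ : Equiv.Perm (Fin n)) (j : ℕ) (hn : 0 < n) :
    permVal σ j < n := by
  unfold permVal
  split
  · exact (σ _).isLt
  · exact hn

lemma permVal_ne {n : ℕ} (σ : Equiv.Perm (Fin n)) {i j : ℕ} (hi : i < n) (hj : j < n)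
    (hij : i ≠ j) : permVal σ i ≠ permVal σ j := by
  rw [permVal_lt σ hi, permVal_lt σ hj]
  intro h
  have := σ.injective (Fin.ext h : σ ⟨i, hi⟩ = σ ⟨j, hj⟩)
  simp only [Fin.mk.injEq] at this
  exact hij this

/-- interior change of direction is an alternation of the ascent pattern -/
lemma changesDir_iff_asc {n : ℕ} (σ : Equiv.Perm (Fin n)) {i : ℕ}
    (h0 : 0 < i) (h1 : i < n - 1) :
    changesDir σ i ↔ (asc σ (i-1) != asc σ i) = true := by
  have hn : 2 ≤ n := by omega
  have ha : permVal σ (i-1) ≠ permVal σ i := permVal_ne σ (by omega) (by omega) (by omega)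
  have hb : permVal σ i ≠ permVal σ (i+1) := permVal_ne σ (by omega) (by omega) (by omega)
  unfold changesDir asc
  rw [show i - 1 + 1 = i by omega]
  rcases Nat.lt_or_ge (permVal σ (i-1)) (permVal σ i) with h | h <;>
    rcases Nat.lt_or_ge (permVal σ i) (permVal σ (i+1)) with h' | h' <;>
    simp [h, h', Nat.lt_of_le_of_ne, not_lt] <;> omega

/-- Insert the new maximum at slot `p`. -/
def ins {m : ℕ} (σ : Equiv.Perm (Fin m)) (p : Fin (m+1)) : Equiv.Perm (Fin (m+1)) :=
  (finSuccEquiv' p).trans ((σ.optionCongr).trans (finSuccEquiv' (Fin.last m)).symm)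

lemma ins_apply_self {m : ℕ} (σ : Equiv.Perm (Fin m)) (p : Fin (m+1)) :
    ins σ p p = Fin.last m := by
  simp [ins, finSuccEquiv'_at, finSuccEquiv'_symm_none]

lemma ins_apply_succAbove {m : ℕ} (σ : Equiv.Perm (Fin m)) (p : Fin (m+1)) (i : Fin m) :
    ins σ p (p.succAbove i) = (σ i).castSucc := by
  simp [ins, finSuccEquiv'_succAbove, finSuccEquiv'_symm_some]

lemma ins_permVal_eq {m : ℕ} (σ : Equiv.Perm (Fin m)) (p : Fin (m+1)) :
    permVal (ins σ p) (p : ℕ) = m := by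
  rw [permVal_lt (ins σ p) (show (p:ℕ) < m+1 from p.isLt)]
  have : (⟨(p:ℕ), p.isLt⟩ : Fin (m+1)) = p := rfl
  rw [this, ins_apply_self]
  simp

lemma ins_permVal_lt {m : ℕ} (σ : Equiv.Perm (Fin m)) (p : Fin (m+1)) {j : ℕ}
    (hj : j < (p : ℕ)) : permVal (ins σ p) j = permVal σ j := by
  have hjm : j < m := by have := p.isLt; omega
  rw [permVal_lt (ins σ p) (show j < m+1 by omega), permVal_lt σ hjm]
  have h1 : (⟨j, show j < m+1 by omega⟩ : Fin (m+1)) = p.succAbove ⟨j, hjm⟩ := by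
    rw [Fin.succAbove_of_castSucc_lt]
    · rfl
    · exact hj
  rw [h1, ins_apply_succAbove]
  simp

lemma ins_permVal_gt {m : ℕ} (σ : Equiv.Perm (Fin m)) (p : Fin (m+1)) {j : ℕ}
    (hj : (p : ℕ) < j) (hjm : j ≤ m) : permVal (ins σ p) j = permVal σ (j-1) := by
  rw [permVal_lt (ins σ p) (show j < m+1 by omega), permVal_lt σ (show j-1 < m by omega)]
  have h1 : (⟨j, show j < m+1 by omega⟩ : Fin (m+1)) = p.succAbove ⟨j-1, by omega⟩ := by
    rw [Fin.succAbove_of_le_castSucc]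
    · ext; simp; omega
    · rw [Fin.le_castSucc_iff]
      simp [Fin.lt_def]
      omega
  rw [h1, ins_apply_succAbove]
  simp

lemma changesDir_ins {m : ℕ} (σ : Equiv.Perm (Fin m)) (p : Fin (m+1)) {i : ℕ}
    (h0 : 0 < i) (h1 : i < m) :
    changesDir (ins σ p) i ↔ slotC (asc σ) (p : ℕ) i = true := by
  have hpm : (p : ℕ) ≤ m := by have := p.isLt; omega
  rcases Nat.lt_or_ge (i+1) (p:ℕ) with hc | hc
  · -- far left
    rw [slotC_lt _ _ _ hc]
    have : changesDir (ins σ p) i ↔ changesDir σ i := by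
      unfold changesDir
      rw [ins_permVal_lt σ p (show i-1 < (p:ℕ) by omega),
        ins_permVal_lt σ p (show i < (p:ℕ) by omega),
        ins_permVal_lt σ p (show i+1 < (p:ℕ) by omega)]
    rw [this]
    exact changesDir_iff_asc σ h0 (by omega)
  rcases eq_or_ne (i+1) (p:ℕ) with hc2 | hc2
  · -- just left of the max
    rw [slotC_eqm1 _ _ _ hc2]
    unfold changesDir
    rw [ins_permVal_lt σ p (show i-1 < (p:ℕ) by omega),
      ins_permVal_lt σ p (show i < (p:ℕ) by omega),
      show i+1 = (p:ℕ) from hc2, ins_permVal_eq]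
    have hb := permVal_lt_self σ i (by omega)
    have ha := permVal_ne σ (show i-1 < m by omega) (show i < m by omega) (by omega)
    unfold asc
    rw [show i - 1 + 1 = i by omega]
    rcases Nat.lt_or_ge (permVal σ (i-1)) (permVal σ i) with h | h <;> simp [h] <;> omega
  rcases eq_or_ne i (p:ℕ) with hc3 | hc3
  · -- at the max: always a peak
    rw [slotC_eq _ _ _ hc3]
    unfold changesDir
    rw [show i = (p:ℕ) from hc3, ins_permVal_eq,
      ins_permVal_lt σ p (show (p:ℕ)-1 < (p:ℕ) by omega),
      ins_permVal_gt σ p (show (p:ℕ) < (p:ℕ)+1 by omega) (by omega)]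
    have hb := permVal_lt_self σ ((p:ℕ)-1) (by omega)
    have hc := permVal_lt_self σ ((p:ℕ)+1-1) (by omega)
    simp only [iff_true]
    left
    exact ⟨hb, hc⟩
  rcases eq_or_ne i ((p:ℕ)+1) with hc4 | hc4
  · -- just right of the max
    rw [slotC_eqp1 _ _ _ hc4]
    unfold changesDir
    rw [show i - 1 = (p:ℕ) by omega, ins_permVal_eq,
      ins_permVal_gt σ p (show (p:ℕ) < i by omega) (by omega),
      ins_permVal_gt σ p (show (p:ℕ) < i+1 by omega) (by omega),
      show i + 1 - 1 = i by omega]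
    have hb := permVal_lt_self σ (i-1) (by omega)
    have hc := permVal_lt_self σ i (by omega)
    have hne := permVal_ne σ (show i-1 < m by omega) (show i < m by omega) (by omega)
    unfold asc
    rw [show (p:ℕ) = i - 1 by omega, show i - 1 + 1 = i by omega]
    rcases Nat.lt_or_ge (permVal σ (i-1)) (permVal σ i) with h | h <;>
      simp [h] <;> omega
  · -- far right
    have hgt : (p:ℕ) + 1 < i := by omega
    rw [slotC_gt _ _ _ hgt]
    have heq : changesDir (ins σ p) i ↔ changesDir σ (i-1) := by
      unfold changesDir
      rw [ins_permVal_gt σ p (show (p:ℕ) < i-1 by omega) (by omega),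
        ins_permVal_gt σ p (show (p:ℕ) < i by omega) (by omega),
        ins_permVal_gt σ p (show (p:ℕ) < i+1 by omega) (by omega),
        show i - 1 - 1 = i - 2 by omega, show i + 1 - 1 = i - 1 + 1 by omega]
    rw [heq, changesDir_iff_asc σ (show 0 < i-1 by omega) (show i-1 < m-1 by omega),
      show i - 1 - 1 = i - 2 by omega]

lemma altRuns_ins {m : ℕ} (σ : Equiv.Perm (Fin m)) (p : Fin (m+1)) :
    altRuns (m+1) (ins σ p) = 1 + slotN (asc σ) m (p : ℕ) := by
  unfold altRuns slotN
  congr 1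
  rw [show m + 1 - 1 = m from rfl]
  apply card_filter_congr
  intro i hi
  simp only [Finset.mem_Ioo] at hi
  exact changesDir_ins σ p hi.1 hi.2

lemma altRuns_eq_runs {m : ℕ} (σ : Equiv.Perm (Fin m)) :
    altRuns m σ = runs (asc σ) m := by
  unfold altRuns runs
  congr 1
  apply card_filter_congr
  intro i hi
  simp only [Finset.mem_Ioo] at hi
  exact changesDir_iff_asc σ hi.1 hi.2

lemma ins_bijective (m : ℕ) :
    Function.Bijective (fun x : Equiv.Perm (Fin m) × Fin (m+1) => ins x.1 x.2) := by
  rw [Fintype.bijective_iff_injective_and_card]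
  constructor
  · rintro ⟨σ, p⟩ ⟨σ', p'⟩ h
    simp only at h
    have hsymm : ∀ (σ₀ : Equiv.Perm (Fin m)) (p₀ : Fin (m+1)),
        (ins σ₀ p₀).symm (Fin.last m) = p₀ := by
      intro σ₀ p₀
      rw [Equiv.symm_apply_eq, ins_apply_self]
    have hp : p = p' := by rw [← hsymm σ p, ← hsymm σ' p', h]
    subst hp
    have hσ : σ = σ' := by
      ext i
      have h1 : ins σ p (p.succAbove i) = ins σ' p (p.succAbove i) := by rw [h]
      rw [ins_apply_succAbove, ins_apply_succAbove] at h1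
      have := Fin.castSucc_injective m h1
      rw [this]
    rw [hσ]
  · rw [Fintype.card_prod, Fintype.card_perm, Fintype.card_perm, Fintype.card_fin,
      Fintype.card_fin, Nat.factorial_succ]
    exact Nat.mul_comm _ _

lemma per_sigma (m r : ℕ) (hr1 : 1 ≤ r) (hrm : r ≤ m - 1) :
    Polynomial.C ((r:ℚ)) * Polynomial.X^r + Polynomial.C 2 * Polynomial.X^(r+1)
      + Polynomial.C (((m-1) - r : ℕ) : ℚ) * Polynomial.X^(r+2)
    = Polynomial.X * (1 - Polynomial.X^2) * Polynomial.derivative (Polynomial.X^r)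
      + (2 * Polynomial.X + Polynomial.C ((m:ℚ) - 1) * Polynomial.X^2) * Polynomial.X^r := by
  have hm2 : 2 ≤ m := by omega
  have hc : (((m-1) - r : ℕ) : ℚ) = (m:ℚ) - 1 - r := by
    rw [Nat.cast_sub hrm, Nat.cast_sub (show 1 ≤ m by omega)]
    norm_num
  rw [hc, Polynomial.derivative_X_pow,
    show Polynomial.X * (1 - Polynomial.X^2)
        * (Polynomial.C ((r:ℚ)) * Polynomial.X ^ (r - 1))
      = (1 - Polynomial.X^2) * Polynomial.C ((r:ℚ)) * (Polynomial.X ^ (r-1) * Polynomial.X)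
      from by ring,
    ← pow_succ, show r - 1 + 1 = r by omega]
  have h2 : Polynomial.C (2:ℚ) = 2 := by
    rw [show (2:ℚ) = ((2:ℕ):ℚ) by norm_num, Polynomial.C_eq_natCast]
    norm_num
  rw [h2]
  simp only [Polynomial.C_sub, Polynomial.C_1]
  ring

/-- The combinatorial recurrence for the alternating-run polynomials. -/
lemma rpoly_rec (m : ℕ) (hm : 3 ≤ m) :
    Rpoly (m+1) = Polynomial.X * (1 - Polynomial.X^2) * Polynomial.derivative (Rpoly m)
      + (2 * Polynomial.X + Polynomial.C ((m:ℚ) - 1) * Polynomial.X^2) * Rpoly m := by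
  unfold Rpoly
  rw [← Fintype.sum_bijective _ (ins_bijective m)
    (fun x => Polynomial.X ^ altRuns (m+1) (ins x.1 x.2))
    (fun τ => Polynomial.X ^ altRuns (m+1) τ) (fun x => rfl)]
  rw [Fintype.sum_prod_type]
  rw [Polynomial.derivative_sum, Finset.mul_sum, Finset.mul_sum, ← Finset.sum_add_distrib]
  apply Finset.sum_congr rfl
  intro σ _
  have hruns1 : 1 ≤ runs (asc σ) m := by unfold runs; omega
  have hrunsm := runs_le (asc σ) m hm
  calc ∑ p : Fin (m+1), Polynomial.X ^ altRuns (m+1) (ins σ p)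
      = ∑ p : Fin (m+1), Polynomial.X ^ (1 + slotN (asc σ) m (p:ℕ)) := by
        apply Finset.sum_congr rfl; intro p _; rw [altRuns_ins]
    _ = ∑ p ∈ Finset.range (m+1), Polynomial.X ^ (1 + slotN (asc σ) m p) := by
        exact Fin.sum_univ_eq_sum_range (fun j => Polynomial.X ^ (1 + slotN (asc σ) m j)) (m+1)
    _ = Polynomial.C ((runs (asc σ) m : ℚ)) * Polynomial.X^(runs (asc σ) m)
        + Polynomial.C 2 * Polynomial.X^(runs (asc σ) m + 1)
        + Polynomial.C (((m-1) - runs (asc σ) m : ℕ) : ℚ)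
            * Polynomial.X^(runs (asc σ) m + 2) := slot_sum (asc σ) m hm
    _ = _ := by
        rw [per_sigma m (runs (asc σ) m) hruns1 hrunsm, altRuns_eq_runs σ]

/-! ### Part B: the algebraic induction -/

lemma U_rec (n k : ℕ) (hn : 1 ≤ n) :
    U (n+1) (k+1) = U n k + ((k:ℤ)+1)^2 * U n (k+1) := by
  obtain ⟨t, rfl⟩ : ∃ t, n = t + 1 := ⟨n - 1, by omega⟩
  rfl

lemma U_zero (n : ℕ) (hn : 1 ≤ n) : U n 0 = 0 := by
  match n, hn with
  | 1, _ => rfl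
  | (t+2), _ => rfl

lemma U_gt (n k : ℕ) (h : n < k) : U n k = 0 := by
  induction n generalizing k with
  | zero => rfl
  | succ t ih =>
    match t, k, h with
    | 0, k, h =>
      have : k ≠ 1 := by omega
      simp [U, this]
    | (s+1), (k+1), h =>
      rw [U_rec (s+1) k (by omega), ih k (by omega), ih (k+1) (by omega)]
      ring

/-- The coefficient `c_j(n) = 2^(2-j) (2j-1)! U(n,j)`. -/
noncomputable def cc (n j : ℕ) : ℚ :=
  (2:ℚ) ^ ((2:ℤ) - (j:ℤ)) * (((2*j-1).factorial : ℕ) : ℚ) * ((U n j : ℤ) : ℚ)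

lemma cc_zero (n : ℕ) (hn : 1 ≤ n) : cc n 0 = 0 := by
  unfold cc
  rw [U_zero n hn, Int.cast_zero, mul_zero]

lemma cc_gt (n : ℕ) : cc n (n+1) = 0 := by
  unfold cc
  rw [U_gt n (n+1) (by omega), Int.cast_zero, mul_zero]

lemma cc_rec (n k : ℕ) (hn : 1 ≤ n) :
    cc (n+1) (k+1)
      = (k:ℚ) * (2*(k:ℚ)+1) * cc n k + ((k:ℚ)+1)^2 * cc n (k+1) := by
  unfold cc
  rw [U_rec n k hn]
  push_cast
  rcases Nat.eq_zero_or_pos k with rfl | hk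
  · rw [U_zero n hn]
    push_cast
    ring
  · have hf1 : (2*(k+1)-1) = (2*k) + 1 := by omega
    have hf2 : (2*k) = (2*k-1) + 1 := by omega
    have hfact : (((2*(k+1)-1).factorial : ℕ) : ℚ)
        = (2*(k:ℚ)+1) * (2*(k:ℚ)) * (((2*k-1).factorial : ℕ) : ℚ) := by
      have hc : ((2*k-1 : ℕ) : ℚ) = 2*(k:ℚ) - 1 := by
        rw [Nat.cast_sub (by omega : 1 ≤ 2*k)]
        push_cast; ring
      rw [hf1, Nat.factorial_succ, show (2*k) = (2*k-1)+1 by omega, Nat.factorial_succ]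
      push_cast [hc]
      ring
    have hp2 : (2:ℚ) ^ ((2:ℤ) - ((k:ℤ)+1)) = (2:ℚ) ^ ((2:ℤ) - (k:ℤ)) / 2 := by
      rw [show (2:ℤ) - ((k:ℤ)+1) = ((2:ℤ)-(k:ℤ)) - 1 by ring,
        zpow_sub_one₀ (by norm_num : (2:ℚ) ≠ 0)]
      ring
    rw [hfact, hp2]
    ring

open Polynomial in
lemma deriv_term (j k : ℕ) (h1 : 1 ≤ j) :
    derivative ((X:ℚ[X])^j * (1-X)^k)
      = C ((j:ℚ)) * X^(j-1) * (1-X)^k - C ((k:ℚ)) * X^j * (1-X)^(k-1) := by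
  obtain ⟨i, rfl⟩ : ∃ i, j = i + 1 := ⟨j - 1, by omega⟩
  rw [derivative_mul, derivative_X_pow]
  rcases Nat.eq_zero_or_pos k with rfl | hk
  · simp
  obtain ⟨t, rfl⟩ : ∃ t, k = t + 1 := ⟨k - 1, by omega⟩
  rw [derivative_pow]
  simp only [derivative_sub, derivative_one, derivative_X, zero_sub,
    Nat.add_sub_cancel, Nat.cast_add, Nat.cast_one]
  push_cast
  ring

open Polynomial in
lemma termI (n j : ℕ) (h1 : 1 ≤ j) (hn : j ≤ n) :
    C ((n:ℚ) - 2) * (X * (1-X)) * ((X:ℚ[X])^j * (1-X)^(n-j))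
      + X * (1 - X^2) * derivative ((X:ℚ[X])^j * (1-X)^(n-j))
      + (2*X + C (2*(n:ℚ) - 2) * X^2) * ((X:ℚ[X])^j * (1-X)^(n-j))
    = (1+X) * (C ((j:ℚ)) * ((X:ℚ[X])^j * (1-X)^(n-j))) := by
  rw [deriv_term j (n-j) h1]
  obtain ⟨i, rfl⟩ : ∃ i, j = i + 1 := ⟨j - 1, by omega⟩
  obtain ⟨k, rfl⟩ : ∃ k, n = (i+1) + k := ⟨n - (i+1), by omega⟩
  rw [show (i+1) + k - (i+1) = k by omega, show i + 1 - 1 = i by omega]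
  rcases Nat.eq_zero_or_pos k with rfl | hkpos
  · simp only [pow_zero, Nat.cast_zero, Nat.sub_zero, zero_sub, pow_succ, pow_one,
      Nat.cast_add, Nat.cast_one, Nat.add_zero]
    simp only [map_add, map_sub, map_mul, map_ofNat, Polynomial.C_1, Polynomial.C_0]
    ring
  · obtain ⟨t, rfl⟩ : ∃ t, k = t + 1 := ⟨k - 1, by omega⟩
    rw [show t + 1 - 1 = t by omega]
    simp only [pow_succ, pow_one, Nat.cast_add, Nat.cast_one]
    simp only [map_add, map_sub, map_mul, map_ofNat, Polynomial.C_1, Polynomial.C_0]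
    ring

open Polynomial in
lemma termII (n j : ℕ) (h1 : 1 ≤ j) (hn : j ≤ n) :
    C ((n:ℚ) - 1) * (X * (1-X)) * ((X:ℚ[X])^j * (1-X)^(n-j))
      + X * (1 - X^2) * derivative ((X:ℚ[X])^j * (1-X)^(n-j))
      + (2*X + C (2*(n:ℚ) - 1) * X^2) * ((X:ℚ[X])^j * (1-X)^(n-j))
    = C (2*(j:ℚ)+1) * ((X:ℚ[X])^(j+1) * (1-X)^(n-j))
      + C ((j:ℚ)) * ((X:ℚ[X])^j * (1-X)^(n-j+1)) := by
  rw [deriv_term j (n-j) h1]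
  obtain ⟨i, rfl⟩ : ∃ i, j = i + 1 := ⟨j - 1, by omega⟩
  obtain ⟨k, rfl⟩ : ∃ k, n = (i+1) + k := ⟨n - (i+1), by omega⟩
  rw [show (i+1) + k - (i+1) = k by omega, show i + 1 - 1 = i by omega]
  rcases Nat.eq_zero_or_pos k with rfl | hkpos
  · simp only [pow_zero, Nat.cast_zero, Nat.sub_zero, zero_sub, pow_succ, pow_one,
      Nat.cast_add, Nat.cast_one, Nat.add_zero]
    simp only [map_add, map_sub, map_mul, map_ofNat, Polynomial.C_1, Polynomial.C_0]
    ring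
  · obtain ⟨t, rfl⟩ : ∃ t, k = t + 1 := ⟨k - 1, by omega⟩
    rw [show t + 1 - 1 = t by omega]
    simp only [pow_succ, pow_one, Nat.cast_add, Nat.cast_one]
    simp only [map_add, map_sub, map_mul, map_ofNat, Polynomial.C_1, Polynomial.C_0]
    ring

/-- `P1 n` is the sum appearing in the theorem. -/
noncomputable def P1 (n : ℕ) : Polynomial ℚ :=
  ∑ j ∈ Finset.Icc 1 n, Polynomial.C (cc n j) * Polynomial.X^j * (1 - Polynomial.X)^(n-j)

noncomputable def Q1 (n : ℕ) : Polynomial ℚ :=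
  ∑ j ∈ Finset.Icc 1 n,
    Polynomial.C ((j:ℚ) * cc n j) * Polynomial.X^j * (1 - Polynomial.X)^(n-j)

open Polynomial in
lemma dA (s : ℕ) : (1+X) * derivative ((1+X:ℚ[X])^s) = C ((s:ℚ)) * (1+X)^s := by
  cases s with
  | zero => simp
  | succ u =>
    rw [derivative_pow]
    simp only [derivative_add, derivative_one, derivative_X, zero_add, mul_one,
      Nat.add_sub_cancel, Nat.cast_add, Nat.cast_one, pow_succ]
    simp only [map_add, Polynomial.C_1]
    ring

open Polynomial in
lemma sumI (n : ℕ) (hn : 2 ≤ n) :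
    C ((n:ℚ)-2) * (X*(1-X)) * P1 n + X*(1-X^2) * derivative (P1 n)
      + (2*X + C (2*(n:ℚ)-2) * X^2) * P1 n = (1+X) * Q1 n := by
  unfold P1 Q1
  rw [derivative_sum, Finset.mul_sum, Finset.mul_sum, Finset.mul_sum, Finset.mul_sum,
    ← Finset.sum_add_distrib, ← Finset.sum_add_distrib]
  apply Finset.sum_congr rfl
  intro j hj
  simp only [Finset.mem_Icc] at hj
  rw [mul_assoc (C (cc n j)), Polynomial.derivative_C_mul]
  simp only [map_mul]
  linear_combination (Polynomial.C (cc n j)) * termI n j hj.1 hj.2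

open Polynomial in
lemma stepI (n : ℕ) (hn : 2 ≤ n) :
    X * (1 - X^2) * derivative ((1+X:ℚ[X])^(n-2) * P1 n)
      + (2*X + C (2*(n:ℚ) - 2) * X^2) * ((1+X)^(n-2) * P1 n)
    = (1+X)^(n-1) * Q1 n := by
  have hc : ((n-2:ℕ):ℚ) = (n:ℚ) - 2 := by
    rw [Nat.cast_sub hn]; norm_num
  have hA : X * (1 - X^2) * (derivative ((1+X:ℚ[X])^(n-2)) * P1 n)
      = (1+X)^(n-2) * (C ((n:ℚ)-2) * (X*(1-X)) * P1 n) := by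
    have hd := dA (n-2)
    rw [hc] at hd
    linear_combination (X*(1-X)*P1 n) * hd
  rw [derivative_mul, show n-1 = (n-2)+1 by omega, pow_succ]
  linear_combination hA + ((1+X:ℚ[X])^(n-2)) * sumI n hn

open Polynomial in
lemma sum_reindex (n : ℕ) (hn : 2 ≤ n) :
    ∑ j ∈ Finset.Icc 1 n,
      (C ((2*(j:ℚ)+1) * ((j:ℚ) * cc n j)) * (X^(j+1) * (1-X)^(n-j))
        + C ((j:ℚ) * ((j:ℚ) * cc n j)) * (X^j * (1-X)^(n-j+1)))
    = P1 (n+1) := by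
  rw [Finset.sum_add_distrib]
  have hS1 : ∑ j ∈ Finset.Icc 1 n,
      C ((2*(j:ℚ)+1) * ((j:ℚ) * cc n j)) * ((X:ℚ[X])^(j+1) * (1-X)^(n-j))
      = ∑ j ∈ Finset.Icc 2 (n+1),
        C (((j:ℚ)-1) * (2*(j:ℚ)-1) * cc n (j-1)) * ((X:ℚ[X])^j * (1-X)^(n+1-j)) := by
    rw [show (2:ℕ) = 1 + 1 by rfl, show n + 1 = n + 1 by rfl,
      ← Finset.map_add_right_Icc 1 n 1, Finset.sum_map]
    apply Finset.sum_congr rfl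
    intro j hj
    simp only [Finset.mem_Icc] at hj
    simp only [addRightEmbedding_apply]
    rw [show j + 1 - 1 = j by omega, show n + 1 - (j+1) = n - j by omega]
    push_cast
    ring_nf
  have hS2 : ∑ j ∈ Finset.Icc 1 n,
      C ((j:ℚ) * ((j:ℚ) * cc n j)) * ((X:ℚ[X])^j * (1-X)^(n-j+1))
      = ∑ j ∈ Finset.Icc 1 n,
        C ((j:ℚ) * ((j:ℚ) * cc n j)) * ((X:ℚ[X])^j * (1-X)^(n+1-j)) := by
    apply Finset.sum_congr rfl
    intro j hj
    simp only [Finset.mem_Icc] at hj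
    rw [show n - j + 1 = n + 1 - j by omega]
  rw [hS1, hS2]
  unfold P1
  have hfull : ∑ j ∈ Finset.Icc 1 (n+1),
      C (((j:ℚ)-1) * (2*(j:ℚ)-1) * cc n (j-1)) * ((X:ℚ[X])^j * (1-X)^(n+1-j))
      = ∑ j ∈ Finset.Icc 2 (n+1),
        C (((j:ℚ)-1) * (2*(j:ℚ)-1) * cc n (j-1)) * ((X:ℚ[X])^j * (1-X)^(n+1-j)) := by
    rw [show Finset.Icc 1 (n+1) = insert 1 (Finset.Icc 2 (n+1)) from by
        ext x; simp only [Finset.mem_insert, Finset.mem_Icc]; omega,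
      Finset.sum_insert (by simp)]
    norm_num
  have hfull2 : ∑ j ∈ Finset.Icc 1 n,
      C ((j:ℚ) * ((j:ℚ) * cc n j)) * ((X:ℚ[X])^j * (1-X)^(n+1-j))
      = ∑ j ∈ Finset.Icc 1 (n+1),
        C ((j:ℚ) * ((j:ℚ) * cc n j)) * ((X:ℚ[X])^j * (1-X)^(n+1-j)) := by
    rw [Finset.sum_Icc_succ_top (by omega : 1 ≤ n+1), cc_gt n]
    norm_num
  rw [← hfull, hfull2, ← Finset.sum_add_distrib]
  apply Finset.sum_congr rfl
  intro j hj
  simp only [Finset.mem_Icc] at hj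
  obtain ⟨k, rfl⟩ : ∃ k, j = k + 1 := ⟨j - 1, by omega⟩
  rw [show k + 1 - 1 = k by omega, cc_rec n k (by omega)]
  push_cast
  simp only [map_add, map_sub, map_mul, map_pow, map_one, map_ofNat, Polynomial.C_1]
  ring

open Polynomial in
lemma sumII (n : ℕ) (hn : 2 ≤ n) :
    C ((n:ℚ)-1) * (X*(1-X)) * Q1 n + X*(1-X^2) * derivative (Q1 n)
      + (2*X + C (2*(n:ℚ)-1) * X^2) * Q1 n = P1 (n+1) := by
  rw [← sum_reindex n hn]
  unfold Q1
  rw [derivative_sum, Finset.mul_sum, Finset.mul_sum, Finset.mul_sum,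
    ← Finset.sum_add_distrib, ← Finset.sum_add_distrib]
  apply Finset.sum_congr rfl
  intro j hj
  simp only [Finset.mem_Icc] at hj
  rw [mul_assoc (C ((j:ℚ) * cc n j)), Polynomial.derivative_C_mul]
  simp only [map_mul]
  linear_combination (Polynomial.C ((j:ℚ)) * Polynomial.C (cc n j)) * termII n j hj.1 hj.2

open Polynomial in
lemma stepII (n : ℕ) (hn : 2 ≤ n) :
    X * (1 - X^2) * derivative ((1+X:ℚ[X])^(n-1) * Q1 n)
      + (2*X + C (2*(n:ℚ) - 1) * X^2) * ((1+X)^(n-1) * Q1 n)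
    = (1+X)^(n-1) * P1 (n+1) := by
  have hc : ((n-1:ℕ):ℚ) = (n:ℚ) - 1 := by
    rw [Nat.cast_sub (by omega : 1 ≤ n)]; norm_num
  have hA : X * (1 - X^2) * (derivative ((1+X:ℚ[X])^(n-1)) * Q1 n)
      = (1+X)^(n-1) * (C ((n:ℚ)-1) * (X*(1-X)) * Q1 n) := by
    have hd := dA (n-1)
    rw [hc] at hd
    linear_combination (X*(1-X)*Q1 n) * hd
  rw [derivative_mul]
  linear_combination hA + ((1+X:ℚ[X])^(n-1)) * sumII n hn

lemma card_altRuns3_one :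
    ((Finset.univ : Finset (Equiv.Perm (Fin 3))).filter (fun π => altRuns 3 π = 1)).card
      = 2 := by decide

lemma card_altRuns3_not_one :
    ((Finset.univ : Finset (Equiv.Perm (Fin 3))).filter (fun π => ¬ altRuns 3 π = 1)).card
      = 4 := by decide

lemma altRuns3_cases (π : Equiv.Perm (Fin 3)) : altRuns 3 π = 1 ∨ altRuns 3 π = 2 := by
  revert π; decide

open Polynomial in
lemma rpoly3 : Rpoly 3 = 2 * X + 4 * X^2 := by
  unfold Rpoly
  rw [← Finset.sum_filter_add_sum_filter_not Finset.univ (fun π => altRuns 3 π = 1)]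
  rw [Finset.sum_congr rfl (fun π hπ => by
    simp only [Finset.mem_filter] at hπ
    rw [hπ.2] : ∀ π ∈ _, (X:ℚ[X]) ^ altRuns 3 π = X^1)]
  rw [Finset.sum_congr rfl (fun π hπ => by
    simp only [Finset.mem_filter] at hπ
    rcases altRuns3_cases π with h | h
    · exact absurd h hπ.2
    · rw [h] : ∀ π ∈ _, (X:ℚ[X]) ^ altRuns 3 π = X^2)]
  rw [Finset.sum_const, Finset.sum_const, card_altRuns3_one, card_altRuns3_not_one]
  simp only [nsmul_eq_mul, Nat.cast_ofNat, pow_one]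

open Polynomial in
lemma main_closed (n : ℕ) (hn : 2 ≤ n) : Rpoly (2*n-1) = (1+X)^(n-2) * P1 n := by
  induction n, hn using Nat.le_induction with
  | base =>
    rw [show 2*2-1 = 3 by rfl, rpoly3, show 2-2 = 0 by rfl, pow_zero, one_mul]
    unfold P1
    rw [show Finset.Icc 1 2 = {1, 2} from by
      ext x; simp only [Finset.mem_Icc, Finset.mem_insert, Finset.mem_singleton]; omega]
    rw [Finset.sum_insert (by simp), Finset.sum_singleton]
    have hc1 : cc 2 1 = 2 := by
      unfold cc
      rw [show U 2 1 = 1 by decide]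
      norm_num
    have hc2 : cc 2 2 = 6 := by
      unfold cc
      rw [show U 2 2 = 1 by decide, show Nat.factorial (2*2-1) = 6 by decide]
      norm_num
    rw [hc1, hc2, show 2-1 = 1 by rfl, show 2-2 = 0 by rfl]
    simp only [pow_one, pow_zero, mul_one]
    rw [show Polynomial.C (2:ℚ) = 2 from by simp only [map_ofNat],
      show Polynomial.C (6:ℚ) = 6 from by simp only [map_ofNat]]
    ring
  | succ n hn ih =>
    have h3a : 3 ≤ 2*n - 1 := by omega
    have h3b : 3 ≤ 2*n := by omega
    have e1 : (2*n - 1) + 1 = 2*n := by omega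
    have e2 : 2*(n+1) - 1 = (2*n) + 1 := by omega
    have ca : ((2*n-1 : ℕ):ℚ) - 1 = 2*(n:ℚ) - 2 := by
      rw [Nat.cast_sub (by omega : 1 ≤ 2*n)]
      push_cast; ring
    have cb : ((2*n : ℕ):ℚ) - 1 = 2*(n:ℚ) - 1 := by push_cast; ring
    have hR2n : Rpoly (2*n) = (1+X)^(n-1) * Q1 n := by
      have h := rpoly_rec (2*n-1) h3a
      rw [e1, ca, ih] at h
      rw [h]
      exact stepI n hn
    have h2 := rpoly_rec (2*n) h3b
    rw [cb, hR2n] at h2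
    rw [e2, h2, show (n+1)-2 = n-1 by omega]
    exact stepII n hn

/-- For `n ≥ 2`, `R_{2n-1}(x) = (1+x)^{n-2} Σ_{j=1}^n 2^(2-j) (2j-1)! U(n,j) x^j (1-x)^(n-j)`. -/
theorem stmt0 (n : ℕ) (hn : 2 ≤ n) :
    Rpoly (2 * n - 1) =
      (1 + Polynomial.X) ^ (n - 2) *
        ∑ j ∈ Finset.Icc 1 n,
          Polynomial.C ((2 : ℚ) ^ ((2 : ℤ) - (j : ℤ)) * ((2 * j - 1).factorial : ℚ) * (U n j : ℚ)) *
            Polynomial.X ^ j * (1 - Polynomial.X) ^ (n - j) := by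
  exact main_closed n hn
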